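/- Let f : ℝ^d × ℱ × ℰ → ℝ be continuous, symmetric (invariant under simultaneous permutation of the r-coordinates and the π-components), and consistent (f(r,π,v) = f(r,π',v) whenever Σᵢrᵢπᵢ = Σᵢrᵢπᵢ'). Then there exists a unique continuous function F on 𝒮 × ℰ such that F(Σᵢ rᵢπᵢ, v) = f(r,π,v) for all r ∈ ℝ^d, flags π, and v ∈ ℰ. -/

import Mathlib

open Matrix

attribute [local instance] Matrix.frobeniusNormedAddCommGroup Matrix.frobeniusNormedSpace

/-- The space of real symmetric `d × d` matrices, as a submodule of the matrix space. -/
def SymMat (d : ℕ) : Submodule ℝ (Matrix (Fin d) (Fin d) ℝ) where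
  carrier := {A | A.IsSymm}
  add_mem' := Matrix.IsSymm.add
  zero_mem' := Matrix.isSymm_zero
  smul_mem' := fun c _ h => h.smul c

/-- A flag: a `d`-tuple of mutually orthogonal rank-one symmetric projections summing to
the identity. -/
def IsFlag {d : ℕ} (π : Fin d → Matrix (Fin d) (Fin d) ℝ) : Prop :=
  (∀ i, (π i).IsSymm ∧ π i * π i = π i ∧ (π i).trace = 1) ∧
  (∀ i j, i ≠ j → π i * π j = 0) ∧ (∑ i, π i) = 1

variable {d : ℕ}

lemma diagonal_eq_sum (r : Fin d → ℝ) :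
    diagonal r = ∑ i, r i • Matrix.single i i 1 := by
  ext a b
  rw [Matrix.sum_apply]
  simp only [Matrix.smul_apply, Matrix.single, of_apply, smul_eq_mul, mul_ite, mul_one, mul_zero,
    diagonal, ← ite_and]
  rcases eq_or_ne a b with h | h
  · subst h; simp
  · simp [h, Ne.symm h, fun i => show ¬(i = a ∧ i = b) from fun ⟨h1,h2⟩ => h (h1 ▸ h2 ▸ rfl)]

lemma exists_flag_decomp (x : SymMat d) :
    ∃ (r : Fin d → ℝ) (π : Fin d → Matrix (Fin d) (Fin d) ℝ), IsFlag π ∧ (x : Matrix (Fin d) (Fin d) ℝ) = ∑ i, r i • π i := by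
  have hx : (x : Matrix (Fin d) (Fin d) ℝ).IsSymm := x.2
  have hA : (x : Matrix (Fin d) (Fin d) ℝ).IsHermitian := by
    rw [Matrix.IsHermitian, conjTranspose_eq_transpose_of_trivial]; exact hx
  set U : Matrix (Fin d) (Fin d) ℝ := (hA.eigenvectorUnitary : Matrix (Fin d) (Fin d) ℝ) with hU
  have hU1 : U * star U = 1 := (Matrix.mem_unitaryGroup_iff).mp hA.eigenvectorUnitary.2
  have hU2 : star U * U = 1 := (Matrix.mem_unitaryGroup_iff').mp hA.eigenvectorUnitary.2
  have cancel : ∀ X : Matrix (Fin d) (Fin d) ℝ, star U * (U * X) = X := fun X => by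
    rw [← mul_assoc, hU2, one_mul]
  have key : ∀ i j : Fin d, (U * Matrix.single i i 1 * star U) * (U * Matrix.single j j 1 * star U)
      = U * (Matrix.single i i (1:ℝ) * Matrix.single j j 1) * star U := by
    intro i j
    simp only [mul_assoc, cancel]
  refine ⟨hA.eigenvalues, fun i => U * Matrix.single i i 1 * star U, ⟨?_, ?_, ?_⟩, ?_⟩
  · intro i
    have hsU : star U = Uᵀ := by
      rw [Matrix.star_eq_conjTranspose, conjTranspose_eq_transpose_of_trivial]
    have hE : (Matrix.single (α := ℝ) i i 1)ᵀ = Matrix.single i i 1 := by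
      ext a b; simp [Matrix.single, and_comm]
    refine ⟨?_, ?_, ?_⟩
    · show (U * Matrix.single i i 1 * star U)ᵀ = U * Matrix.single i i 1 * star U
      rw [hsU, Matrix.transpose_mul, Matrix.transpose_mul, Matrix.transpose_transpose, hE,
        ← mul_assoc]
    · rw [key, Matrix.single_mul_single_same, one_mul]
    · rw [Matrix.trace_mul_comm, ← mul_assoc, hU2, one_mul]
      simp [Matrix.trace, Matrix.diag, Matrix.single]
  · intro i j hij
    rw [key, Matrix.single_mul_single_of_ne (h := hij), mul_zero, zero_mul]
  · have h1 : (∑ i, Matrix.single i i (1 : ℝ)) = (1 : Matrix (Fin d) (Fin d) ℝ) := by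
      have := diagonal_eq_sum (d := d) (fun _ => (1:ℝ))
      simp only [one_smul] at this
      rw [← this, diagonal_one]
    calc (∑ i : Fin d, U * Matrix.single i i 1 * star U)
        = U * (∑ i, Matrix.single i i (1:ℝ)) * star U := by
          simp only [Finset.mul_sum, Finset.sum_mul]
      _ = 1 := by rw [h1, mul_one, hU1]
  · have hspec := hA.spectral_theorem
    have hd : diagonal (RCLike.ofReal ∘ hA.eigenvalues) = diagonal hA.eigenvalues := by
      congr 1
    rw [hd, diagonal_eq_sum] at hspec
    conv_lhs => rw [hspec]
    simp only [Unitary.conjStarAlgAut_apply, Finset.mul_sum, Finset.sum_mul, Matrix.mul_smul, Matrix.smul_mul]; rfl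

lemma frob_sq (A : Matrix (Fin d) (Fin d) ℝ) : ‖A‖ ^ 2 = ∑ i, ∑ j, (A i j) ^ 2 := by
  rw [frobenius_norm_def, ← Real.rpow_natCast _ 2, ← Real.rpow_mul (by positivity)]
  norm_num

lemma flag_norm_one {π : Fin d → Matrix (Fin d) (Fin d) ℝ} (hπ : IsFlag π) (i : Fin d) :
    ‖π i‖ = 1 := by
  obtain ⟨h1, _, _⟩ := hπ
  obtain ⟨hs, hid, htr⟩ := h1 i
  have h2 : ‖π i‖ ^ 2 = 1 := by
    rw [frob_sq]
    have : ∀ a b, π i a b ^ 2 = π i a b * π i b a := by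
      intro a b
      rw [sq]; congr 1
      exact hs.apply b a
    calc ∑ a, ∑ b, π i a b ^ 2 = ∑ a, ∑ b, π i a b * π i b a := by
          simp_rw [this]
      _ = (π i * π i).trace := by
          rw [Matrix.trace]; simp [Matrix.diag, Matrix.mul_apply]
      _ = 1 := by rw [hid, htr]
  nlinarith [norm_nonneg (π i)]

lemma eig_bound {r : Fin d → ℝ} {π : Fin d → Matrix (Fin d) (Fin d) ℝ} (hπ : IsFlag π)
    (i : Fin d) : |r i| ≤ ‖∑ j, r j • π j‖ := by
  obtain ⟨h1, h2, h3⟩ := hπ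
  set A := ∑ j, r j • π j with hA
  have htr : (A * π i).trace = r i := by
    have : A * π i = r i • π i := by
      rw [hA, Finset.sum_mul]
      rw [Finset.sum_eq_single i]
      · rw [Matrix.smul_mul, (h1 i).2.1]
      · intro j _ hji
        rw [Matrix.smul_mul, h2 j i hji, smul_zero]
      · intro h; exact absurd (Finset.mem_univ i) h
    rw [this, Matrix.trace_smul, (h1 i).2.2, smul_eq_mul, mul_one]
  have hcs : ((A * π i).trace) ^ 2 ≤ ‖A‖ ^ 2 * ‖π i‖ ^ 2 := by
    have hsym : (π i).IsSymm := (h1 i).1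
    have htrace : (A * π i).trace = ∑ p : Fin d × Fin d, A p.1 p.2 * π i p.1 p.2 := by
      rw [Matrix.trace]
      rw [Fintype.sum_prod_type]
      simp only [Matrix.diag, Matrix.mul_apply]
      refine Finset.sum_congr rfl fun a _ => Finset.sum_congr rfl fun b _ => ?_
      congr 1
      exact hsym.apply a b
    rw [htrace, frob_sq, frob_sq]
    have := Finset.sum_mul_sq_le_sq_mul_sq Finset.univ
      (fun p : Fin d × Fin d => A p.1 p.2) (fun p : Fin d × Fin d => π i p.1 p.2)
    simpa [Fintype.sum_prod_type] using this
  rw [htr, flag_norm_one ⟨h1, h2, h3⟩ i] at hcs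
  simp only [one_pow, mul_one] at hcs
  exact abs_le_of_sq_le_sq hcs (norm_nonneg A)

lemma det_one_add_smul_proj {π : Matrix (Fin d) (Fin d) ℝ} (hs : π.IsSymm)
    (hid : π * π = π) (htr : π.trace = 1) (c : ℝ) : (1 + c • π).det = 1 + c := by
  have hH : π.IsHermitian := by
    rw [Matrix.IsHermitian, conjTranspose_eq_transpose_of_trivial]; exact hs
  set U : Matrix (Fin d) (Fin d) ℝ := (hH.eigenvectorUnitary : Matrix (Fin d) (Fin d) ℝ) with hU
  have hU1 : U * star U = 1 := (Matrix.mem_unitaryGroup_iff).mp hH.eigenvectorUnitary.2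
  have hU2 : star U * U = 1 := (Matrix.mem_unitaryGroup_iff').mp hH.eigenvectorUnitary.2
  set μ := hH.eigenvalues with hμ
  have hdiag : star U * π * U = diagonal μ := by
    have := hH.conjStarAlgAut_star_eigenvectorUnitary; simp only [Unitary.conjStarAlgAut_star_apply] at this
    rw [this]; congr 1
  have hπU : π = U * diagonal μ * star U := by
    rw [← hdiag]
    calc π = (U * star U) * π * (U * star U) := by rw [hU1, one_mul, mul_one]
      _ = U * (star U * π * U) * star U := by simp only [mul_assoc]
  have hidem : ∀ j, μ j * μ j = μ j := by
    intro j
    have h : diagonal μ * diagonal μ = diagonal μ := by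
      rw [← hdiag]
      calc star U * π * U * (star U * π * U)
          = star U * (π * (U * star U) * π) * U := by simp only [mul_assoc]
        _ = star U * π * U := by rw [hU1, mul_one, hid]
    rw [Matrix.diagonal_mul_diagonal] at h
    have := congrFun (congrFun h j) j
    simpa [Matrix.diagonal] using this
  have htrμ : ∑ j, μ j = 1 := by
    have h : (diagonal μ).trace = π.trace := by
      rw [← hdiag, mul_assoc, Matrix.trace_mul_comm, mul_assoc, hU1, mul_one]
    rw [Matrix.trace_diagonal] at h
    rw [h, htr]
  have hstep : (1 : Matrix (Fin d) (Fin d) ℝ) + c • π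
      = U * diagonal (fun j => 1 + c * μ j) * star U := by
    have h1 : diagonal (fun j => 1 + c * μ j) = 1 + c • diagonal μ := by
      ext a b
      rcases eq_or_ne a b with h | h
      · subst h; simp [Matrix.diagonal, Matrix.one_apply]
      · simp [Matrix.diagonal, Matrix.one_apply, h]
    rw [h1, mul_add, add_mul, mul_one, hU1, Matrix.mul_smul, Matrix.smul_mul, ← hπU]
  have hdet : (1 + c • π).det = ∏ j, (1 + c * μ j) := by
    rw [hstep, Matrix.det_mul, Matrix.det_mul, mul_comm, ← mul_assoc, ← Matrix.det_mul, hU2]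
    simp [Matrix.det_diagonal]
  rw [hdet]
  have hμ01 : ∀ j, μ j = 0 ∨ μ j = 1 := by
    intro j
    rcases mul_eq_zero.mp (show μ j * (μ j - 1) = 0 by have := hidem j; ring_nf; linarith) with h | h
    · exact Or.inl h
    · exact Or.inr (by linarith)
  classical
  set s : Finset (Fin d) := Finset.univ.filter (fun j => μ j = 1) with hs'
  have hprod : ∏ j, (1 + c * μ j) = (1 + c) ^ s.card := by
    rw [← Finset.prod_filter_mul_prod_filter_not Finset.univ (fun j => μ j = 1)]
    have h1 : ∀ j ∈ s, 1 + c * μ j = 1 + c := by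
      intro j hj
      rw [hs', Finset.mem_filter] at hj
      rw [hj.2, mul_one]
    have h2 : ∀ j ∈ Finset.univ.filter (fun j => ¬ μ j = 1), 1 + c * μ j = 1 := by
      intro j hj
      rw [Finset.mem_filter] at hj
      rcases hμ01 j with h | h
      · rw [h, mul_zero, add_zero]
      · exact absurd h hj.2
    rw [Finset.prod_congr rfl h1, Finset.prod_congr rfl h2, Finset.prod_const, Finset.prod_const,
      one_pow, mul_one]
  have hcard : s.card = 1 := by
    have h : ∑ j, μ j = (s.card : ℝ) := by
      rw [← Finset.sum_filter_add_sum_filter_not Finset.univ (fun j => μ j = 1)]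
      have h1 : ∀ j ∈ s, μ j = 1 := fun j hj => (Finset.mem_filter.mp hj).2
      have h2 : ∀ j ∈ Finset.univ.filter (fun j => ¬ μ j = 1), μ j = 0 := by
        intro j hj
        rcases hμ01 j with h | h
        · exact h
        · exact absurd h (Finset.mem_filter.mp hj).2
      rw [Finset.sum_congr rfl h1, Finset.sum_congr rfl h2, Finset.sum_const, Finset.sum_const_zero,
        add_zero, nsmul_eq_mul, mul_one]
    rw [htrμ] at h
    exact_mod_cast h.symm
  rw [hprod, hcard, pow_one]

lemma list_prod_one_add (c : Fin d → ℝ) {π : Fin d → Matrix (Fin d) (Fin d) ℝ}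
    (horth : ∀ i j, i ≠ j → π i * π j = 0) :
    ∀ l : List (Fin d), l.Nodup →
      (l.map (fun i => 1 + (c i - 1) • π i)).prod = 1 + (l.map (fun i => (c i - 1) • π i)).sum := by
  intro l
  induction l with
  | nil => simp
  | cons a t ih =>
    intro h
    rw [List.nodup_cons] at h
    rw [List.map_cons, List.prod_cons, List.map_cons, List.sum_cons, ih h.2]
    have hz : ((c a - 1) • π a) * (t.map (fun i => (c i - 1) • π i)).sum = 0 := by
      rw [← List.sum_map_mul_left]
      have : ∀ i ∈ t, ((c a - 1) • π a) * ((c i - 1) • π i) = 0 := by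
        intro i hi
        have hai : a ≠ i := fun hh => h.1 (hh ▸ hi)
        rw [Matrix.smul_mul, Matrix.mul_smul, horth a i hai, smul_zero, smul_zero]
      rw [List.map_congr_left this]
      simp
    rw [add_mul, one_mul, mul_add, mul_one, hz, add_zero]
    abel

lemma det_flag_sum {π : Fin d → Matrix (Fin d) (Fin d) ℝ} (hπ : IsFlag π) (c : Fin d → ℝ) :
    (∑ i, c i • π i).det = ∏ i, c i := by
  obtain ⟨h1, h2, h3⟩ := hπ
  have hfactor : (∑ i, c i • π i)
      = ((List.finRange d).map (fun i => 1 + (c i - 1) • π i)).prod := by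
    rw [list_prod_one_add c h2 _ (List.nodup_finRange d)]
    have hls : ((List.finRange d).map (fun i => (c i - 1) • π i)).sum
        = ∑ i, (c i - 1) • π i := by
      rw [← List.ofFn_eq_map, List.sum_ofFn]
    rw [hls]
    have : ∀ i : Fin d, (c i - 1) • π i = c i • π i - π i := by
      intro i; rw [sub_smul, one_smul]
    simp_rw [this]
    rw [Finset.sum_sub_distrib, h3]
    abel
  rw [hfactor]
  have hdet : (((List.finRange d).map (fun i => 1 + (c i - 1) • π i)).prod).det
      = (((List.finRange d).map (fun i => 1 + (c i - 1) • π i)).map Matrix.det).prod := by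
    have := List.prod_hom ((List.finRange d).map (fun i => 1 + (c i - 1) • π i))
      Matrix.detMonoidHom
    simpa [Matrix.detMonoidHom] using this.symm
  rw [hdet, List.map_map]
  have : (fun i => ((1 + (c i - 1) • π i)).det) = c := by
    funext i
    rw [det_one_add_smul_proj (h1 i).1 (h1 i).2.1 (h1 i).2.2]
    ring
  calc ((List.finRange d).map (Matrix.det ∘ fun i => 1 + (c i - 1) • π i)).prod
      = ((List.finRange d).map c).prod := by rw [show (Matrix.det ∘ fun i => 1 + (c i - 1) • π i) = c from this]
    _ = ∏ i, c i := by rw [← List.ofFn_eq_map, List.prod_ofFn]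

lemma exists_comp_perm {f g : Fin d → ℝ}
    (h : Multiset.map f Finset.univ.val = Multiset.map g Finset.univ.val) :
    ∃ σ : Equiv.Perm (Fin d), f = g ∘ σ := by
  have hperm : (List.ofFn f).Perm (List.ofFn g) := by
    rw [← Multiset.coe_eq_coe]
    have hf : ((List.ofFn f : List ℝ) : Multiset ℝ) = Multiset.map f Finset.univ.val := by
      rw [List.ofFn_eq_map]
      rfl
    have hg : ((List.ofFn g : List ℝ) : Multiset ℝ) = Multiset.map g Finset.univ.val := by
      rw [List.ofFn_eq_map]
      rfl
    rw [hf, hg, h]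
  set σf := Tuple.sort f
  set σg := Tuple.sort g
  have hsorted : f ∘ σf = g ∘ σg := by
    apply List.ofFn_injective
    haveI : IsAntisymm ℝ (fun x1 x2 => x1 ≤ x2) := ⟨fun _ _ => le_antisymm⟩
    refine (fun hp h1 h2 => List.Perm.eq_of_sortedLE h1 h2 hp) ?_ ?_ ?_
    · exact ((σf.ofFn_comp_perm f).trans hperm).trans (σg.ofFn_comp_perm g).symm
    · exact (Tuple.monotone_sort f).sortedLE_ofFn
    · exact (Tuple.monotone_sort g).sortedLE_ofFn
  refine ⟨σf.symm.trans σg, ?_⟩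
  funext i
  have := congrFun hsorted (σf.symm i)
  simpa using this

lemma flag_comp_perm {π : Fin d → Matrix (Fin d) (Fin d) ℝ} (hπ : IsFlag π)
    (σ : Equiv.Perm (Fin d)) : IsFlag (π ∘ σ) := by
  obtain ⟨h1, h2, h3⟩ := hπ
  refine ⟨fun i => h1 (σ i), fun i j hij => h2 _ _ (fun hh => hij (σ.injective hh)), ?_⟩
  rw [← h3]
  exact Fintype.sum_equiv σ _ _ (fun i => rfl)

lemma eig_multiset_eq {r r' : Fin d → ℝ} {π π' : Fin d → Matrix (Fin d) (Fin d) ℝ}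
    (hπ : IsFlag π) (hπ' : IsFlag π') (h : (∑ i, r i • π i) = ∑ i, r' i • π' i) :
    Multiset.map r Finset.univ.val = Multiset.map r' Finset.univ.val := by
  have hdet : ∀ t : ℝ, ∏ i, (t - r i) = ∏ i, (t - r' i) := by
    intro t
    have key : ∀ (s : Fin d → ℝ) (ρ : Fin d → Matrix (Fin d) (Fin d) ℝ), IsFlag ρ →
        (∑ i, (fun j => t - s j) i • ρ i) = t • (1 : Matrix (Fin d) (Fin d) ℝ) - ∑ i, s i • ρ i := by
      intro s ρ hρ
      have h3 := hρ.2.2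
      calc (∑ i, (t - s i) • ρ i) = ∑ i, (t • ρ i - s i • ρ i) := by
            refine Finset.sum_congr rfl fun i _ => ?_
            rw [sub_smul]
        _ = t • (∑ i, ρ i) - ∑ i, s i • ρ i := by
            rw [Finset.sum_sub_distrib, Finset.smul_sum]
        _ = t • 1 - ∑ i, s i • ρ i := by rw [h3]
    have e1 : ∏ i, (t - r i) = (t • (1 : Matrix (Fin d) (Fin d) ℝ) - ∑ i, r i • π i).det := by
      rw [← key r π hπ, det_flag_sum hπ]
    have e2 : ∏ i, (t - r' i) = (t • (1 : Matrix (Fin d) (Fin d) ℝ) - ∑ i, r' i • π' i).det := by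
      rw [← key r' π' hπ', det_flag_sum hπ']
    rw [e1, e2, h]
  have hpoly : (∏ i, (Polynomial.X - Polynomial.C (r i)))
      = ∏ i, (Polynomial.X - Polynomial.C (r' i)) := by
    apply Polynomial.funext
    intro t
    simp only [Polynomial.eval_prod, Polynomial.eval_sub, Polynomial.eval_X, Polynomial.eval_C]
    exact hdet t
  have hroots : ∀ s : Fin d → ℝ, (∏ i, (Polynomial.X - Polynomial.C (s i))).roots
      = Multiset.map s Finset.univ.val := by
    intro s
    have : (∏ i, (Polynomial.X - Polynomial.C (s i)))
        = ((Multiset.map s Finset.univ.val).map (fun a => Polynomial.X - Polynomial.C a)).prod := by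
      rw [Multiset.map_map]
      rfl
    rw [this, Polynomial.roots_multiset_prod_X_sub_C]
  rw [← hroots r, ← hroots r', hpoly]

lemma isClosed_flags : IsClosed {π : Fin d → Matrix (Fin d) (Fin d) ℝ | IsFlag π} := by
  have hset : {π : Fin d → Matrix (Fin d) (Fin d) ℝ | IsFlag π} =
      (⋂ i, ({π : Fin d → Matrix (Fin d) (Fin d) ℝ | (π i)ᵀ = π i}
        ∩ {π | π i * π i = π i} ∩ {π | (π i).trace = 1}))
      ∩ (⋂ i, ⋂ j, ⋂ (_ : i ≠ j), {π : Fin d → Matrix (Fin d) (Fin d) ℝ | π i * π j = 0})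
      ∩ {π : Fin d → Matrix (Fin d) (Fin d) ℝ | (∑ i, π i) = 1} := by
    ext π
    simp only [Set.mem_setOf_eq, Set.mem_inter_iff, Set.mem_iInter, IsFlag, Matrix.IsSymm,
      forall_and]
    tauto
  rw [hset]
  refine IsClosed.inter (IsClosed.inter ?_ ?_) ?_
  · refine isClosed_iInter fun i => ?_
    refine IsClosed.inter (IsClosed.inter ?_ ?_) ?_
    · exact isClosed_eq ((continuous_apply i).matrix_transpose) (continuous_apply i)
    · exact isClosed_eq (Continuous.matrix_mul (continuous_apply i) (continuous_apply i))
        (continuous_apply i)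
    · exact isClosed_eq ((continuous_apply i).matrix_trace) continuous_const
  · exact isClosed_iInter fun i => isClosed_iInter fun j => isClosed_iInter fun _ =>
      isClosed_eq (Continuous.matrix_mul (continuous_apply i) (continuous_apply j)) continuous_const
  · exact isClosed_eq (continuous_finset_sum _ fun i _ => continuous_apply i) continuous_const


open Topology in
/-- A continuous, symmetric, consistent function `f(r, π, v)` on `ℝ^d × ℱ × ℰ` induces a
unique continuous function `F` on `𝒮 × ℰ` with `F(Σᵢ rᵢπᵢ, v) = f(r, π, v)`. -/
theorem exists_unique_continuous_extension (d : ℕ)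
    (E : Type*) [NormedAddCommGroup E] [InnerProductSpace ℝ E] [FiniteDimensional ℝ E]
    (f : (Fin d → ℝ) → (Fin d → Matrix (Fin d) (Fin d) ℝ) → E → ℝ)
    (hcont : ContinuousOn
      (fun p : (Fin d → ℝ) × (Fin d → Matrix (Fin d) (Fin d) ℝ) × E => f p.1 p.2.1 p.2.2)
      (Set.univ ×ˢ {π | IsFlag π} ×ˢ Set.univ))
    (hsym : ∀ (σ : Equiv.Perm (Fin d)) (r : Fin d → ℝ)
      (π : Fin d → Matrix (Fin d) (Fin d) ℝ) (v : E),
      f (r ∘ σ) (π ∘ σ) v = f r π v)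
    (hconsist : ∀ (r : Fin d → ℝ) (π π' : Fin d → Matrix (Fin d) (Fin d) ℝ) (v : E),
      IsFlag π → IsFlag π' → (∑ i, r i • π i) = (∑ i, r i • π' i) → f r π v = f r π' v) :
    ∃! F : SymMat d × E → ℝ, Continuous F ∧
      ∀ (r : Fin d → ℝ) (π : Fin d → Matrix (Fin d) (Fin d) ℝ) (v : E), IsFlag π →
        ∀ x : SymMat d, (x : Matrix (Fin d) (Fin d) ℝ) = ∑ i, r i • π i →
          F (x, v) = f r π v := by
  classical
  choose R P hflagR hdecompR using exists_flag_decomp (d := d)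
  set F : SymMat d × E → ℝ := fun p => f (R p.1) (P p.1) p.2 with hFdef
  have hkey : ∀ (r : Fin d → ℝ) (π : Fin d → Matrix (Fin d) (Fin d) ℝ) (v : E), IsFlag π →
      ∀ x : SymMat d, (x : Matrix (Fin d) (Fin d) ℝ) = ∑ i, r i • π i → F (x, v) = f r π v := by
    intro r π v hπ x hx
    have hxR : (x : Matrix (Fin d) (Fin d) ℝ) = ∑ i, R x i • P x i := hdecompR x
    have hmul : Multiset.map r Finset.univ.val = Multiset.map (R x) Finset.univ.val :=
      eig_multiset_eq hπ (hflagR x) (by rw [← hx, hxR])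
    obtain ⟨σ, hσ⟩ := exists_comp_perm hmul
    set π'' : Fin d → Matrix (Fin d) (Fin d) ℝ := π ∘ σ.symm with hπ''def
    have hcomp : π'' ∘ σ = π := by funext i; simp [hπ''def]
    have hflag'' : IsFlag π'' := flag_comp_perm hπ σ.symm
    have hs1 : f r π v = f (R x) π'' v := by
      have h0 := hsym σ (R x) π'' v
      rw [hcomp, ← hσ] at h0
      exact h0
    have hsum'' : (∑ i, R x i • π'' i) = ∑ i, R x i • P x i := by
      rw [← hxR, hx]
      calc (∑ i, R x i • π'' i) = ∑ j, R x (σ j) • π'' (σ j) :=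
            (Equiv.sum_comp σ (fun i => R x i • π'' i)).symm
        _ = ∑ j, r j • π j := by
            refine Finset.sum_congr rfl fun j _ => ?_
            have h1 : R x (σ j) = r j := by rw [hσ]; rfl
            have h2 : π'' (σ j) = π j := congrFun hcomp j
            rw [h1, h2]
    have hs2 : f (R x) (P x) v = f (R x) π'' v :=
      hconsist (R x) (P x) π'' v (hflagR x) hflag'' hsum''.symm
    show f (R x) (P x) v = f r π v
    rw [hs2, hs1]
  have hcontF : Continuous F := by
    rw [continuous_iff_continuousAt]
    rintro ⟨x₀, v₀⟩
    set C : ℝ := ‖(x₀ : Matrix (Fin d) (Fin d) ℝ)‖ + 1 with hC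
    have hC0 : (0:ℝ) ≤ C := by positivity
    set K : Set ((Fin d → ℝ) × (Fin d → Matrix (Fin d) (Fin d) ℝ) × E) :=
      {p | IsFlag p.2.1 ∧ (∀ i, |p.1 i| ≤ C) ∧ p.2.2 ∈ Metric.closedBall v₀ 1} with hK
    have hKclosed : IsClosed K := by
      have h1 : IsClosed {p : (Fin d → ℝ) × (Fin d → Matrix (Fin d) (Fin d) ℝ) × E |
          IsFlag p.2.1} := isClosed_flags.preimage (continuous_fst.comp continuous_snd)
      have h2 : IsClosed {p : (Fin d → ℝ) × (Fin d → Matrix (Fin d) (Fin d) ℝ) × E |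
          ∀ i, |p.1 i| ≤ C} := by
        have he : {p : (Fin d → ℝ) × (Fin d → Matrix (Fin d) (Fin d) ℝ) × E | ∀ i, |p.1 i| ≤ C}
            = ⋂ i, {p : (Fin d → ℝ) × (Fin d → Matrix (Fin d) (Fin d) ℝ) × E | |p.1 i| ≤ C} := by
          ext p; simp
        rw [he]
        exact isClosed_iInter fun i => isClosed_le
          (continuous_abs.comp ((continuous_apply i).comp continuous_fst)) continuous_const
      have h3 : IsClosed {p : (Fin d → ℝ) × (Fin d → Matrix (Fin d) (Fin d) ℝ) × E |
          p.2.2 ∈ Metric.closedBall v₀ 1} :=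
        Metric.isClosed_closedBall.preimage (continuous_snd.comp continuous_snd)
      exact h1.inter (h2.inter h3)
    have hKbdd : Bornology.IsBounded K := by
      have hsub : K ⊆ Metric.closedBall 0 C ×ˢ
          (Metric.closedBall 0 1 ×ˢ Metric.closedBall v₀ 1) := by
        rintro ⟨r, π, v⟩ ⟨hflag, hr, hv⟩
        refine ⟨?_, ?_, hv⟩
        · rw [mem_closedBall_zero_iff]
          exact (pi_norm_le_iff_of_nonneg hC0).mpr
            (fun i => by simpa [Real.norm_eq_abs] using hr i)
        · rw [mem_closedBall_zero_iff]
          exact (pi_norm_le_iff_of_nonneg zero_le_one).mpr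
            (fun i => le_of_eq (flag_norm_one hflag i))
      exact (Bornology.IsBounded.prod Metric.isBounded_closedBall
        (Bornology.IsBounded.prod Metric.isBounded_closedBall
          Metric.isBounded_closedBall)).subset hsub
    have hKcompact : IsCompact K := Metric.isCompact_of_isClosed_isBounded hKclosed hKbdd
    have hmem : ∀ p : K, (∑ i, (p : (Fin d → ℝ) × (Fin d → Matrix (Fin d) (Fin d) ℝ) × E).1 i
        • (p : (Fin d → ℝ) × (Fin d → Matrix (Fin d) (Fin d) ℝ) × E).2.1 i) ∈ SymMat d := by
      rintro ⟨⟨r, π, v⟩, hflag, -, -⟩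
      exact Submodule.sum_mem _ fun i _ => Submodule.smul_mem _ _
        (show π i ∈ SymMat d from (hflag.1 i).1)
    set φ : K → SymMat d × E :=
      fun p => (⟨∑ i, p.1.1 i • p.1.2.1 i, hmem p⟩, p.1.2.2) with hφ
    have hφcont : Continuous φ := by
      refine Continuous.prodMk ?_ ?_
      · refine Continuous.subtype_mk ?_ _
        refine continuous_finset_sum _ fun i _ => ?_
        exact ((continuous_apply i).comp (continuous_fst.comp continuous_subtype_val)).smul
          ((continuous_apply i).comp ((continuous_fst.comp continuous_snd).comp
            continuous_subtype_val))
      · exact (continuous_snd.comp continuous_snd).comp continuous_subtype_val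
    haveI : CompactSpace K := isCompact_iff_compactSpace.mp hKcompact
    have hrfcont : Continuous (Set.rangeFactorization φ) := hφcont.subtype_mk _
    have hq : IsQuotientMap (Set.rangeFactorization φ) :=
      IsClosedMap.isQuotientMap hrfcont.isClosedMap hrfcont Set.rangeFactorization_surjective
    have hFT : ContinuousOn F (Set.range φ) := by
      rw [continuousOn_iff_continuous_restrict, hq.continuous_iff]
      have heq : (Set.range φ).domRestrict F ∘ Set.rangeFactorization φ
          = fun p : K => f p.1.1 p.1.2.1 p.1.2.2 := by
        funext p
        show F (φ p) = _
        exact hkey p.1.1 p.1.2.1 p.1.2.2 p.2.1 _ rfl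
      rw [heq]
      have hsubK : K ⊆ Set.univ ×ˢ {π | IsFlag π} ×ˢ Set.univ := by
        rintro ⟨r, π, v⟩ ⟨hflag, -, -⟩
        exact ⟨trivial, hflag, trivial⟩
      have hc2 := hcont.mono hsubK
      rw [continuousOn_iff_continuous_restrict] at hc2
      exact hc2
    have hTnhds : Set.range φ ∈ 𝓝 (x₀, v₀) := by
      have hsub2 : Metric.closedBall x₀ 1 ×ˢ Metric.closedBall v₀ 1 ⊆ Set.range φ := by
        rintro ⟨x, v⟩ ⟨hx, hv⟩
        obtain ⟨r, π, hflag, hdec⟩ := exists_flag_decomp x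
        have hnorm : ‖(x : Matrix (Fin d) (Fin d) ℝ)‖ ≤ C := by
          have h1 : dist x x₀ ≤ 1 := Metric.mem_closedBall.mp hx
          have h2 : dist (x : Matrix (Fin d) (Fin d) ℝ) (x₀ : Matrix (Fin d) (Fin d) ℝ) ≤ 1 := h1
          rw [dist_eq_norm] at h2
          have h3 : ‖(x : Matrix (Fin d) (Fin d) ℝ)‖
              ≤ ‖(x : Matrix (Fin d) (Fin d) ℝ) - (x₀ : Matrix (Fin d) (Fin d) ℝ)‖
                + ‖(x₀ : Matrix (Fin d) (Fin d) ℝ)‖ := by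
            calc ‖(x : Matrix (Fin d) (Fin d) ℝ)‖
                = ‖(x : Matrix (Fin d) (Fin d) ℝ) - (x₀ : Matrix (Fin d) (Fin d) ℝ)
                  + (x₀ : Matrix (Fin d) (Fin d) ℝ)‖ := by rw [sub_add_cancel]
              _ ≤ _ := norm_add_le _ _
          rw [hC]
          linarith
        have hb : ∀ i, |r i| ≤ C := by
          intro i
          calc |r i| ≤ ‖∑ j, r j • π j‖ := eig_bound hflag i
            _ = ‖(x : Matrix (Fin d) (Fin d) ℝ)‖ := by rw [← hdec]
            _ ≤ C := hnorm
        have hKmem : ((r, π, v) : (Fin d → ℝ) × (Fin d → Matrix (Fin d) (Fin d) ℝ) × E) ∈ K :=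
          ⟨hflag, hb, hv⟩
        refine ⟨⟨(r, π, v), hKmem⟩, ?_⟩
        refine Prod.ext ?_ rfl
        exact Subtype.ext hdec.symm
      exact Filter.mem_of_superset
        (prod_mem_nhds (Metric.closedBall_mem_nhds _ one_pos)
          (Metric.closedBall_mem_nhds _ one_pos)) hsub2
    exact hFT.continuousAt hTnhds
  refine ⟨F, ⟨hcontF, fun r π v hπ x hx => hkey r π v hπ x hx⟩, ?_⟩
  rintro G ⟨-, hG⟩
  funext p
  obtain ⟨x, v⟩ := p
  obtain ⟨r, π, hflag, hdec⟩ := exists_flag_decomp x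
  rw [hG r π v hflag x hdec, hkey r π v hflag x hdec]
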